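/- Consider the additive two-factor regression f(x₁, x₂) = (1, x₁, x₂)ᵀ on the design region [0,1]² and normal use conditions x_{u1} < x_{u2} < 0. Set λ_c = 1/(1 + 2|x_{u1}|). For each a with 0 ≤ a ≤ 1, the design ξ_a* assigning weights (1 + a|x_{u1}| + (1−a)|x_{u2}|)λ_c to (0,0), (1−a)(|x_{u1}| − |x_{u2}|)λ_c to (0,1), a(|x_{u1}| − |x_{u2}|)λ_c to (1,0), and ((1−a)|x_{u1}| + a|x_{u2}|)λ_c to (1,1) is a valid approximate design which attains f(x_{u1}, x_{u2})ᵀ M(ξ_a*)⁻¹ f(x_{u1}, x_{u2}) = (1 + 2|x_{u1}|)² (for 0 < a < 1 the information matrix is invertible); and every approximate design ξ on [0,1]² with invertible information matrix M(ξ) satisfies f(x_{u1}, x_{u2})ᵀ M(ξ)⁻¹ f(x_{u1}, x_{u2}) ≥ (1 + 2|x_{u1}|)². Hence each ξ_a* is c-optimal for extrapolation at (x_{u1}, x_{u2}). -/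

import Mathlib

open Matrix

/-- The additive two-factor regression function `f(x₁,x₂) = (1, x₁, x₂)ᵀ`. -/
noncomputable def fAdd (z : ℝ × ℝ) : Fin 3 → ℝ := ![1, z.1, z.2]

/-- The information matrix `M(ξ) = Σᵢ wᵢ f(zᵢ) f(zᵢ)ᵀ` of an approximate design on `[0,1]²`
for the additive two-factor regression `fAdd`, allowing an arbitrary finite support size. -/
noncomputable def infoM {m : ℕ} (z : Fin m → ℝ × ℝ) (w : Fin m → ℝ) :
    Matrix (Fin 3) (Fin 3) ℝ :=
  ∑ i, w i • vecMulVec (fAdd (z i)) (fAdd (z i))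

lemma infoM_apply {m : ℕ} (z : Fin m → ℝ × ℝ) (w : Fin m → ℝ) (i j : Fin 3) :
    infoM z w i j = ∑ k, w k * (fAdd (z k) i * fAdd (z k) j) := by
  simp [infoM, Matrix.sum_apply, vecMulVec_apply, mul_assoc]

lemma quad {m : ℕ} (z : Fin m → ℝ × ℝ) (w : Fin m → ℝ) (x y : Fin 3 → ℝ) :
    x ⬝ᵥ (infoM z w) *ᵥ y = ∑ k, w k * ((fAdd (z k) ⬝ᵥ x) * (fAdd (z k) ⬝ᵥ y)) := by
  simp only [dotProduct, mulVec, infoM_apply, Fin.sum_univ_three,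
    Finset.mul_sum, Finset.sum_mul, ← Finset.sum_add_distrib]
  refine Finset.sum_congr rfl fun k _ => by ring

set_option maxHeartbeats 1000000 in
/-- For the additive two-factor regression on `[0,1]²` with use conditions
`x_{u1} < x_{u2} < 0` and `λ_c = 1/(1+2|x_{u1}|)`: for every `a ∈ [0,1]` the family of
designs `ξ_a*` on the four vertices with weights
`(1 + a|x_{u1}| + (1−a)|x_{u2}|)λ_c, (1−a)(|x_{u1}|−|x_{u2}|)λ_c, a(|x_{u1}|−|x_{u2}|)λ_c,
((1−a)|x_{u1}| + a|x_{u2}|)λ_c` is a valid approximate design (nonnegative weights summing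
to one); for `0 < a < 1` its information matrix is invertible and the `c`-criterion value is
`(1+2|x_{u1}|)²`; and every approximate design with invertible information matrix has
criterion value at least `(1+2|x_{u1}|)²`.  Hence each `ξ_a*` is `c`-optimal for
extrapolation at `(x_{u1}, x_{u2})`. -/
theorem stmt14 (xu1 xu2 : ℝ) (hxu12 : xu1 < xu2) (hxu2 : xu2 < 0) :
    (∀ a ∈ Set.Icc (0 : ℝ) 1,
      (∀ i, (0 : ℝ) ≤
        ![(1 + a * |xu1| + (1 - a) * |xu2|) / (1 + 2 * |xu1|),
          (1 - a) * (|xu1| - |xu2|) / (1 + 2 * |xu1|),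
          a * (|xu1| - |xu2|) / (1 + 2 * |xu1|),
          ((1 - a) * |xu1| + a * |xu2|) / (1 + 2 * |xu1|)] i) ∧
      ∑ i, ![(1 + a * |xu1| + (1 - a) * |xu2|) / (1 + 2 * |xu1|),
          (1 - a) * (|xu1| - |xu2|) / (1 + 2 * |xu1|),
          a * (|xu1| - |xu2|) / (1 + 2 * |xu1|),
          ((1 - a) * |xu1| + a * |xu2|) / (1 + 2 * |xu1|)] i = 1) ∧
    (∀ a ∈ Set.Ioo (0 : ℝ) 1,
      IsUnit (infoM ![(0, 0), (0, 1), (1, 0), (1, 1)]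
        ![(1 + a * |xu1| + (1 - a) * |xu2|) / (1 + 2 * |xu1|),
          (1 - a) * (|xu1| - |xu2|) / (1 + 2 * |xu1|),
          a * (|xu1| - |xu2|) / (1 + 2 * |xu1|),
          ((1 - a) * |xu1| + a * |xu2|) / (1 + 2 * |xu1|)]).det ∧
      fAdd (xu1, xu2) ⬝ᵥ (infoM ![(0, 0), (0, 1), (1, 0), (1, 1)]
        ![(1 + a * |xu1| + (1 - a) * |xu2|) / (1 + 2 * |xu1|),
          (1 - a) * (|xu1| - |xu2|) / (1 + 2 * |xu1|),
          a * (|xu1| - |xu2|) / (1 + 2 * |xu1|),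
          ((1 - a) * |xu1| + a * |xu2|) / (1 + 2 * |xu1|)])⁻¹ *ᵥ fAdd (xu1, xu2) =
        (1 + 2 * |xu1|) ^ 2) ∧
    ∀ {m : ℕ} (z : Fin m → ℝ × ℝ) (w : Fin m → ℝ),
      (∀ i, z i ∈ Set.Icc (0 : ℝ) 1 ×ˢ Set.Icc (0 : ℝ) 1) → (∀ i, 0 < w i) →
      ∑ i, w i = 1 → IsUnit (infoM z w).det →
      (1 + 2 * |xu1|) ^ 2 ≤ fAdd (xu1, xu2) ⬝ᵥ (infoM z w)⁻¹ *ᵥ fAdd (xu1, xu2) := by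
  have hxu1 : xu1 < 0 := hxu12.trans hxu2
  have habs1 : |xu1| = -xu1 := abs_of_neg hxu1
  have habs2 : |xu2| = -xu2 := abs_of_neg hxu2
  have hA2 : (0:ℝ) < |xu2| := by rw [habs2]; linarith
  have hA12 : |xu2| < |xu1| := by rw [habs1, habs2]; linarith
  have hD : (0:ℝ) < 1 + 2 * |xu1| := by positivity
  have hD' : (1 + 2 * |xu1|) ≠ 0 := ne_of_gt hD
  set A1 := |xu1| with hA1def
  set A2 := |xu2| with hA2def
  refine ⟨?_, ?_, ?_⟩
  · -- part 1 : valid design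
    rintro a ⟨ha0, ha1⟩
    constructor
    · intro i
      fin_cases i <;> simp only [Matrix.cons_val_zero, Matrix.cons_val_one, Matrix.head_cons,
        Matrix.cons_val_two, Matrix.cons_val_three, Matrix.tail_cons] <;>
        apply div_nonneg _ (le_of_lt hD) <;>
        nlinarith [mul_nonneg ha0 hA2.le, mul_nonneg ha0 (hA2.trans hA12).le,
          mul_nonneg (sub_nonneg.mpr ha1) hA2.le,
          mul_nonneg (sub_nonneg.mpr ha1) (hA2.trans hA12).le,
          mul_nonneg ha0 (sub_nonneg.mpr hA12.le),
          mul_nonneg (sub_nonneg.mpr ha1) (sub_nonneg.mpr hA12.le)]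
    · rw [Fin.sum_univ_four]
      simp only [Matrix.cons_val_zero, Matrix.cons_val_one, Matrix.head_cons,
        Matrix.cons_val_two, Matrix.cons_val_three, Matrix.tail_cons]
      field_simp
      have hD'' : 1 + A1 * 2 ≠ 0 := by rw [mul_comm]; exact hD'
      ring_nf
      field_simp
      ring
  · -- part 2
    rintro a ⟨ha0, ha1⟩
    set wv : Fin 4 → ℝ :=
      ![(1 + a * A1 + (1 - a) * A2) / (1 + 2 * A1),
        (1 - a) * (A1 - A2) / (1 + 2 * A1),
        a * (A1 - A2) / (1 + 2 * A1),
        ((1 - a) * A1 + a * A2) / (1 + 2 * A1)] with hwv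
    set zv : Fin 4 → ℝ × ℝ := ![(0, 0), (0, 1), (1, 0), (1, 1)] with hzv
    set M := infoM zv wv with hM
    have hdet : M.det = (A1 - A2) *
        (A1 * (1 + A2) + 2 * a * A1 * (A1 - A2) - a ^ 2 * (A1 - A2) * (1 + 2 * A1))
          / (1 + 2 * A1) ^ 3 := by
      rw [hM, Matrix.det_fin_three]
      simp only [infoM_apply, Fin.sum_univ_four, hzv, hwv, fAdd, Matrix.cons_val_zero,
        Matrix.cons_val_one, Matrix.head_cons, Matrix.cons_val_two, Matrix.cons_val_three,
        Matrix.tail_cons]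
      field_simp
      ring
    have hnum : 0 < (A1 - A2) *
        (A1 * (1 + A2) + 2 * a * A1 * (A1 - A2) - a ^ 2 * (A1 - A2) * (1 + 2 * A1)) := by
      have h1 : 0 < A1 - A2 := sub_pos.mpr hA12
      have hA1pos : 0 < A1 := hA2.trans hA12
      refine mul_pos h1 ?_
      nlinarith [mul_pos ha0 (sub_pos.mpr ha1), mul_pos hA2 hA1pos, mul_pos h1 hA1pos,
        mul_pos (mul_pos ha0 (sub_pos.mpr ha1)) (mul_pos h1 hD)]
    have hdetu : IsUnit M.det := by
      rw [hdet]
      exact isUnit_iff_ne_zero.mpr (by positivity)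
    refine ⟨hdetu, ?_⟩
    set u : Fin 3 → ℝ := ![(1 + 2 * A1), -2 * (1 + 2 * A1), 0] with hu
    have hMu : M *ᵥ u = fAdd (xu1, xu2) := by
      rw [hM]
      funext i
      fin_cases i <;>
      · simp only [Fin.zero_eta, Fin.mk_one, Fin.reduceFinMk, mulVec, dotProduct,
          Fin.sum_univ_three, infoM_apply, Fin.sum_univ_four,
          hzv, hwv, hu, fAdd, Matrix.cons_val_zero, Matrix.cons_val_one, Matrix.head_cons,
          Matrix.cons_val_two, Matrix.cons_val_three, Matrix.tail_cons]
        simp only [habs1, habs2]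
        have h1 : (0:ℝ) < 1 + 2 * -xu1 := by linarith
        have h2 : ((1:ℝ) - xu1 * 2) ≠ 0 := ne_of_gt (by linarith)
        have h3 : ((1:ℝ) + -(2 * xu1)) ≠ 0 := ne_of_gt (by linarith)
        field_simp [h3]
        ring_nf
        field_simp <;> ring
    have hinv : M⁻¹ *ᵥ fAdd (xu1, xu2) = u := by
      rw [← hMu, Matrix.mulVec_mulVec, Matrix.nonsing_inv_mul M hdetu, Matrix.one_mulVec]
    rw [hinv]
    simp only [dotProduct, Fin.sum_univ_three, fAdd, hu, Matrix.cons_val_zero,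
      Matrix.cons_val_one, Matrix.head_cons, Matrix.cons_val_two, Matrix.tail_cons]
    simp only [habs1]
    try ring
  · -- part 3 : lower bound
    intro m z w hz hw hsum hdetu
    set M := infoM z w with hM
    set c : Fin 3 → ℝ := fAdd (xu1, xu2) with hc
    set u : Fin 3 → ℝ := ![1, -2, 0] with hu
    set v : Fin 3 → ℝ := M⁻¹ *ᵥ c with hv
    have hMv : M *ᵥ v = c := by
      rw [hv, Matrix.mulVec_mulVec, Matrix.mul_nonsing_inv M hdetu, Matrix.one_mulVec]
    have hcu : c ⬝ᵥ u = 1 + 2 * A1 := by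
      simp only [dotProduct, Fin.sum_univ_three, hc, hu, fAdd, Matrix.cons_val_zero,
        Matrix.cons_val_one, Matrix.head_cons, Matrix.cons_val_two, Matrix.tail_cons]
      rw [habs1]; ring
    have hcu2 : c ⬝ᵥ u = ∑ k, w k * ((fAdd (z k) ⬝ᵥ u) * (fAdd (z k) ⬝ᵥ v)) := by
      rw [← quad z w u v, ← hMv, dotProduct_comm]
    have hvv : c ⬝ᵥ v = ∑ k, w k * ((fAdd (z k) ⬝ᵥ v) * (fAdd (z k) ⬝ᵥ v)) := by
      rw [← quad z w v v, ← hMv, dotProduct_comm]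
    -- Cauchy-Schwarz
    set F : Fin m → ℝ := fun k => Real.sqrt (w k) * (fAdd (z k) ⬝ᵥ u) with hF
    set G : Fin m → ℝ := fun k => Real.sqrt (w k) * (fAdd (z k) ⬝ᵥ v) with hG
    have hsq : ∀ k, Real.sqrt (w k) * Real.sqrt (w k) = w k :=
      fun k => Real.mul_self_sqrt (hw k).le
    have hFG : ∀ k, F k * G k = w k * ((fAdd (z k) ⬝ᵥ u) * (fAdd (z k) ⬝ᵥ v)) := by
      intro k; rw [hF, hG]; dsimp only; rw [mul_mul_mul_comm, hsq k]
    have hF2 : ∀ k, F k ^ 2 = w k * ((fAdd (z k) ⬝ᵥ u) * (fAdd (z k) ⬝ᵥ u)) := by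
      intro k; rw [hF]; dsimp only
      rw [sq, mul_mul_mul_comm, hsq k]
    have hG2 : ∀ k, G k ^ 2 = w k * ((fAdd (z k) ⬝ᵥ v) * (fAdd (z k) ⬝ᵥ v)) := by
      intro k; rw [hG]; dsimp only
      rw [sq, mul_mul_mul_comm, hsq k]
    have hCS := Finset.sum_mul_sq_le_sq_mul_sq Finset.univ F G
    have hFle : ∑ k, F k ^ 2 ≤ 1 := by
      rw [← hsum]
      refine Finset.sum_le_sum fun k _ => ?_
      rw [hF2 k]
      have hx1 : (z k).1 ∈ Set.Icc (0:ℝ) 1 := (hz k).1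
      have hfu : fAdd (z k) ⬝ᵥ u = 1 - 2 * (z k).1 := by
        simp [fAdd, dotProduct, Fin.sum_univ_three, hu]
        ring
      rw [hfu]
      have h1 : (1 - 2 * (z k).1) * (1 - 2 * (z k).1) ≤ 1 := by
        nlinarith [hx1.1, hx1.2]
      nlinarith [(hw k).le, h1]
    have hGnn : 0 ≤ ∑ k, G k ^ 2 :=
      Finset.sum_nonneg fun k _ => sq_nonneg _
    have hkey : (c ⬝ᵥ u) ^ 2 ≤ c ⬝ᵥ v := by
      have e1 : (∑ k, F k * G k) = c ⬝ᵥ u := by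
        rw [hcu2]; exact Finset.sum_congr rfl fun k _ => hFG k
      have e2 : (∑ k, G k ^ 2) = c ⬝ᵥ v := by
        rw [hvv]; exact Finset.sum_congr rfl fun k _ => hG2 k
      calc (c ⬝ᵥ u) ^ 2 = (∑ k, F k * G k) ^ 2 := by rw [e1]
        _ ≤ (∑ k, F k ^ 2) * ∑ k, G k ^ 2 := hCS
        _ ≤ 1 * ∑ k, G k ^ 2 := mul_le_mul_of_nonneg_right hFle hGnn
        _ = c ⬝ᵥ v := by rw [one_mul, e2]
    calc (1 + 2 * A1) ^ 2 = (c ⬝ᵥ u) ^ 2 := by rw [hcu]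
      _ ≤ c ⬝ᵥ v := hkey
      _ = fAdd (xu1, xu2) ⬝ᵥ (infoM z w)⁻¹ *ᵥ fAdd (xu1, xu2) := rfl
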